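/- Let p be a prime and y an integer coprime to p. Then for all n ≥ 1, ν_p(G_n(y^(p²)) − G_n(y^p)) ≥ 2, where G_n(x) = Σ_{j=1}^n x^j/j. -/
import Mathlib

-- Step lemma: if p^c ∣ A - B with 1 ≤ c, then p^(c+1) ∣ A^p - B^p.
lemma step_lemma (p : ℕ) (hp : p.Prime) (A B : ℤ) (c : ℕ) (hc : 1 ≤ c)
    (h : (p : ℤ) ^ c ∣ A - B) : (p : ℤ) ^ (c + 1) ∣ A ^ p - B ^ p := by
  have hpd : (p : ℤ) ∣ A - B := dvd_trans (dvd_pow_self (p : ℤ) (by omega)) h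
  rw [← geom_sum₂_mul, pow_succ']
  refine mul_dvd_mul ?_ h
  haveI : Fact p.Prime := ⟨hp⟩
  have hA : ((A : ZMod p)) = (B : ZMod p) := by
    have := (ZMod.intCast_zmod_eq_zero_iff_dvd (A - B) p).mpr hpd
    push_cast at this
    linear_combination this
  have hS : (p : ℤ) ∣ ∑ i ∈ Finset.range p, A ^ i * B ^ (p - 1 - i) := by
    rw [← ZMod.intCast_zmod_eq_zero_iff_dvd]
    push_cast
    rw [hA, geom_sum₂_self, ZMod.natCast_self, zero_mul]
  exact hS

-- Main divisibility
lemma key_dvd (p : ℕ) (hp : p.Prime) (a b : ℤ) (h2 : (p : ℤ) ^ 2 ∣ a - b) :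
    ∀ j : ℕ, 1 ≤ j → (p : ℤ) ^ (2 + padicValNat p j) ∣ a ^ j - b ^ j := by
  intro j
  induction j using Nat.strong_induction_on with
  | _ j ih =>
    intro hj
    by_cases hdvd : p ∣ j
    · obtain ⟨m, rfl⟩ := hdvd
      have hm : 1 ≤ m := by
        rcases Nat.eq_zero_or_pos m with rfl | h; · simp at hj
        · exact h
      have hmlt : m < p * m := by
        have := hp.one_lt; nlinarith
      have hval : padicValNat p (p * m) = padicValNat p m + 1 := by
        haveI : Fact p.Prime := ⟨hp⟩
        rw [padicValNat.mul hp.ne_zero (by omega), padicValNat_self]; omega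
      rw [hval, pow_mul' a p m, pow_mul' b p m]
      have := step_lemma p hp (a ^ m) (b ^ m) (2 + padicValNat p m) (by omega)
        (ih m hmlt hm)
      rw [show 2 + (padicValNat p m + 1) = 2 + padicValNat p m + 1 by omega]
      exact this
    · rw [padicValNat.eq_zero_of_not_dvd hdvd]
      exact dvd_trans h2 (sub_dvd_pow_sub_pow a b j)

theorem Gn_yp2_sub_yp (p : ℕ) [Fact p.Prime] (y : ℤ) (hy : IsCoprime y (p : ℤ)) :
    ∀ n : ℕ, 1 ≤ n →
      ‖((((∑ j ∈ Finset.Icc 1 n, ((y : ℚ) ^ (p ^ 2)) ^ j / j) -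
          (∑ j ∈ Finset.Icc 1 n, ((y : ℚ) ^ p) ^ j / j)) : ℚ) : ℚ_[p])‖ ≤ (p : ℝ) ^ (-2 : ℤ) := by
  intro n hn
  have hp := (Fact.out : p.Prime)
  -- p^2 ∣ y^(p^2) - y^p
  have hferm : (p : ℤ) ∣ y ^ p - y := by
    rw [← ZMod.intCast_zmod_eq_zero_iff_dvd]
    push_cast
    rw [ZMod.pow_card, sub_self]
  have h2 : (p : ℤ) ^ 2 ∣ y ^ (p ^ 2) - y ^ p := by
    have := dvd_sub_pow_of_dvd_sub (p := p) (a := y ^ p) (b := y) hferm 1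
    rwa [pow_one, ← pow_mul, ← pow_two] at this
  rw [← Finset.sum_sub_distrib, Rat.cast_sum]
  refine IsUltrametricDist.norm_sum_le_of_forall_le_of_nonneg (by positivity) ?_
  intro j hj
  have hj1 : 1 ≤ j := (Finset.mem_Icc.mp hj).1
  -- rewrite the term
  have hterm : ((((y : ℚ) ^ (p ^ 2)) ^ j / j - ((y : ℚ) ^ p) ^ j / j : ℚ) : ℚ_[p])
      = (((y ^ p ^ 2) ^ j - (y ^ p) ^ j : ℤ) : ℚ_[p]) / (j : ℚ_[p]) := by
    push_cast
    ring
  rw [hterm]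
  by_cases hN0 : (y ^ p ^ 2) ^ j - (y ^ p) ^ j = 0
  · rw [hN0]
    simp only [Int.cast_zero, zero_div, norm_zero]
    exact zpow_nonneg (Nat.cast_nonneg p) _
  have hjne : (j : ℚ_[p]) ≠ 0 := Nat.cast_ne_zero.mpr (by omega)
  have hnormj : ‖(j : ℚ_[p])‖ = (p : ℝ) ^ (-(padicValNat p j : ℤ)) := by
    rw [Padic.norm_eq_zpow_neg_valuation hjne, Padic.valuation_natCast]
  have hnormN : ‖(((y ^ p ^ 2) ^ j - (y ^ p) ^ j : ℤ) : ℚ_[p])‖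
      ≤ (p : ℝ) ^ (-(2 + padicValNat p j : ℕ) : ℤ) :=
    (Padic.norm_int_le_pow_iff_dvd _ (2 + padicValNat p j)).mpr
      (key_dvd p hp _ _ h2 j hj1)
  have hp0 : (0 : ℝ) < (p : ℝ) := by exact_mod_cast hp.pos
  rw [norm_div, hnormj]
  calc ‖(((y ^ p ^ 2) ^ j - (y ^ p) ^ j : ℤ) : ℚ_[p])‖ / (p : ℝ) ^ (-(padicValNat p j : ℤ))
      ≤ (p : ℝ) ^ (-(2 + padicValNat p j : ℕ) : ℤ) / (p : ℝ) ^ (-(padicValNat p j : ℤ)) := by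
        exact div_le_div_of_nonneg_right hnormN (le_of_lt (zpow_pos hp0 _))
    _ = (p : ℝ) ^ (-2 : ℤ) := by
        rw [← zpow_sub₀ (ne_of_gt hp0)]
        congr 1
        push_cast
        ring
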